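/- Let M ≥ 2, λ ∈ ℂ with Im(λ) > 0 and Re(λ) ∈ [−E,E], 0 < E < 2√M, and z_λ the fixed point of z ↦ −1/(Mz+λ) in ℍ with w(z) = |z−z_λ|²/(Im(z)Im(z_λ)). Then for z₁,…,z_M ∈ ℍ, w(φ(z₁,…,z_M,0,λ)) ≤ w((z₁+⋯+z_M)/M) where φ(z₁,…,z_M,0,λ) = −1/(z₁+⋯+z_M+λ). Equivalently, the hyperbolic distance from φ(z₁,…,z_M,0,λ) to z_λ is at most the hyperbolic distance from (z₁+⋯+z_M)/M to z_λ. -/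

import Mathlib

theorem stmt18 (M : ℕ) (hM : 2 ≤ M) (E : ℝ) (hE0 : 0 < E)
    (hE : E < 2 * Real.sqrt M)
    (lam : ℂ) (hlam : 0 < lam.im) (hre : lam.re ∈ Set.Icc (-E) E)
    (zlam : ℂ) (hzlam : 0 < zlam.im)
    (hfix : zlam = -1 / ((M : ℂ) * zlam + lam))
    (z : Fin M → ℂ) (hz : ∀ i, 0 < (z i).im) :
    let w : ℂ → ℝ := fun u => ‖u - zlam‖ ^ 2 / (u.im * zlam.im)
    w (-1 / (∑ i, z i + lam)) ≤ w ((∑ i, z i) / M) := by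
  intro w
  have hMpos : (0:ℝ) < M := by
    have : (0:ℕ) < M := by omega
    exact_mod_cast this
  set S : ℂ := ∑ i, z i with hSdef
  have hSim : 0 < S.im := by
    rw [hSdef, Complex.im_sum]
    haveI : NeZero M := ⟨by omega⟩
    exact Finset.sum_pos (fun i _ => hz i) Finset.univ_nonempty
  set B : ℂ := (M : ℂ) * zlam + lam with hBdef
  set A : ℂ := S + lam with hAdef
  have hAim : A.im = S.im + lam.im := by simp [hAdef]
  have hBim : B.im = M * zlam.im + lam.im := by simp [hBdef]
  have hB : B ≠ 0 := by
    intro h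
    rw [h] at hfix
    simp at hfix
    rw [hfix] at hzlam
    simp at hzlam
  have hA : A ≠ 0 := by
    intro h
    have : A.im = 0 := by rw [h]; simp
    rw [hAim] at this
    linarith
  have hnsB : Complex.normSq B ≠ 0 := by simpa using hB
  have hnsA : Complex.normSq A ≠ 0 := by simpa using hA
  have hzB : zlam * B = -1 := by
    rw [hfix]; field_simp
  have hzlamim : zlam.im * Complex.normSq B = B.im := by
    rw [hfix, neg_div, Complex.neg_im, one_div, Complex.inv_im]
    field_simp
  have hnB : (M:ℝ) < Complex.normSq B := by
    have h1 : zlam.im * Complex.normSq B = M * zlam.im + lam.im := by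
      rw [hzlamim, hBim]
    nlinarith [hzlam, hlam]
  have hAimpos : 0 < A.im := by rw [hAim]; linarith
  have hkey : (M:ℝ) * S.im ≤ Complex.normSq B * A.im := by
    rw [hAim]; nlinarith [hlam.le, hSim]
  have hAB : S - M*zlam = A - B := by rw [hAdef, hBdef]; ring
  have hone : (-1:ℂ)/A * A = -1 := by field_simp
  have hmain : (-1/A - zlam) * (A*B) = A - B := by
    calc (-1/A - zlam) * (A*B) = ((-1/A)*A)*B - (zlam*B)*A := by ring
      _ = (-1)*B - (-1)*A := by rw [hone, hzB]
      _ = A - B := by ring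
  have hdiff : -1/A - zlam = (S - M*zlam)/(A*B) := by
    rw [hAB, eq_div_iff (mul_ne_zero hA hB)]
    exact hmain
  have him1 : (-1/A).im = A.im / Complex.normSq A := by
    rw [neg_div, Complex.neg_im, one_div, Complex.inv_im]
    ring
  have him2 : (S/(M:ℂ)).im = S.im / M := by
    rw [Complex.div_im]
    simp [Complex.normSq]
    field_simp
  have hMne : (M:ℂ) ≠ 0 := by exact_mod_cast (by omega : M ≠ 0)
  have hnum2 : S/(M:ℂ) - zlam = (S - M*zlam)/(M:ℂ) := by
    field_simp
  show ‖-1/A - zlam‖ ^ 2 / ((-1/A).im * zlam.im)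
      ≤ ‖S/(M:ℂ) - zlam‖ ^ 2 / ((S/(M:ℂ)).im * zlam.im)
  rw [hdiff, hnum2, him1, him2, norm_div, norm_div, norm_mul]
  have habsM : ‖(M:ℂ)‖ = (M:ℝ) := by
    simpa using Complex.norm_natCast M
  rw [habsM]
  have hL : (‖S - M*zlam‖ / (‖A‖ * ‖B‖)) ^ 2
        / (A.im / Complex.normSq A * zlam.im)
      = ‖S - M*zlam‖ ^ 2 / (Complex.normSq B * A.im * zlam.im) := by
    rw [div_pow, mul_pow, Complex.sq_norm A, Complex.sq_norm B]
    field_simp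
  have hR : (‖S - M*zlam‖ / (M:ℝ)) ^ 2 / (S.im / (M:ℝ) * zlam.im)
      = ‖S - M*zlam‖ ^ 2 / ((M:ℝ) * S.im * zlam.im) := by
    rw [div_pow]
    field_simp
  rw [hL, hR]
  apply div_le_div_of_nonneg_left (by positivity) (by positivity)
  nlinarith [hzlam, hkey, hAimpos]
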